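/- In the nilCoxeter algebra of S_n, the elements h_k = Σ_{w decreasing, ℓ(w)=k} A_w pairwise commute: h_k h_l = h_l h_k for all k, l. -/

import Mathlib

set_option maxSynthPendingDepth 3

open Polynomial


/-- The defining relations of the nilCoxeter algebra of `S_n` (with `m = n - 1`
generators `A_1, …, A_{n-1}`, indexed here by `Fin m`): `A_i² = 0`, the braid
relation for adjacent indices, and commutation for distant indices. -/
inductive NilCoxeterRel (m : ℕ) :
    FreeAlgebra ℤ (Fin m) → FreeAlgebra ℤ (Fin m) → Prop
  | sq (i : Fin m) :
      NilCoxeterRel m (FreeAlgebra.ι ℤ i * FreeAlgebra.ι ℤ i) 0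
  | braid (i j : Fin m) (h : (i : ℕ) + 1 = j ∨ (j : ℕ) + 1 = i) :
      NilCoxeterRel m (FreeAlgebra.ι ℤ i * FreeAlgebra.ι ℤ j * FreeAlgebra.ι ℤ i)
        (FreeAlgebra.ι ℤ j * FreeAlgebra.ι ℤ i * FreeAlgebra.ι ℤ j)
  | comm (i j : Fin m) (h : (i : ℕ) + 1 < j ∨ (j : ℕ) + 1 < i) :
      NilCoxeterRel m (FreeAlgebra.ι ℤ i * FreeAlgebra.ι ℤ j)
        (FreeAlgebra.ι ℤ j * FreeAlgebra.ι ℤ i)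

/-- The nilCoxeter algebra of `S_n` with `m = n - 1` generators. -/
abbrev NilCoxeter (m : ℕ) := RingQuot (NilCoxeterRel m)

/-- The generator `A_i` of the nilCoxeter algebra. -/
noncomputable def nilA (m : ℕ) (i : Fin m) : NilCoxeter m :=
  RingQuot.mkRingHom (NilCoxeterRel m) (FreeAlgebra.ι ℤ i)

/-- `h_k = Σ_{w decreasing, ℓ(w) = k} A_w`: for each decreasing permutation `w` of
length `k`, the element `A_w` is the product of the generators indexed by the
(unique) strictly decreasing reduced word of `w`; these correspond exactly to the
`k`-element subsets of the generator indices, multiplied in decreasing order. -/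
noncomputable def nilH (m k : ℕ) : NilCoxeter m :=
  ∑ S ∈ Finset.powersetCard k (Finset.univ : Finset (Fin m)),
    (((S.sort (· ≤ ·)).reverse).map (nilA m)).prod

section Abstract
variable {T : Type*} [Ring T]

def ncPhi (a : ℕ → T) (t : T) (i : ℕ) : T := 1 + t * a i

def ncD (a : ℕ → T) : ℕ → T → T
  | 0, _ => 1
  | n+1, t => ncPhi a t n * ncD a n t

def ncU (a : ℕ → T) : ℕ → T → T
  | 0, _ => 1
  | n+1, t => ncU a n t * ncPhi a t n

lemma ncPhi_mul_same (a : ℕ → T) (hsq : ∀ i, a i * a i = 0) (t s : T) (i : ℕ)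
    (hs : Commute s (a i)) :
    ncPhi a t i * ncPhi a s i = ncPhi a (t + s) i := by
  have key : a i * (s * a i) = 0 := by
    rw [← mul_assoc, ← hs.eq, mul_assoc, hsq i, mul_zero]
  simp only [ncPhi]
  calc (1 + t * a i) * (1 + s * a i)
      = 1 + s * a i + t * a i + t * (a i * (s * a i)) := by noncomm_ring
    _ = 1 + (t + s) * a i := by rw [key, mul_zero, add_zero, add_mul]; abel

lemma commute_ncPhi_ncPhi (a : ℕ → T) {t s : T} {i j : ℕ}
    (hij : Commute (a i) (a j)) (hts : Commute t s)
    (htj : Commute t (a j)) (hsi : Commute s (a i)) :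
    Commute (ncPhi a t i) (ncPhi a s j) := by
  have c1 : Commute (t * a i) (s * a j) :=
    (hts.mul_right htj).mul_left (hsi.symm.mul_right hij)
  exact ((Commute.one_left _).add_left ((Commute.one_right _).add_right c1))

lemma ncYB (a : ℕ → T) (hsq : ∀ i, a i * a i = 0)
    (hbr : ∀ i, a (i + 1) * a i * a (i + 1) = a i * a (i + 1) * a i)
    (t s : T) (i : ℕ)
    (ht : ∀ j, Commute t (a j)) (hs : ∀ j, Commute s (a j)) (hts : Commute t s) :
    ncPhi a t (i+1) * ncPhi a (t+s) i * ncPhi a s (i+1)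
      = ncPhi a s i * ncPhi a (t+s) (i+1) * ncPhi a t i := by
  set A := a i with hA
  set B := a (i+1) with hB
  have sqA : ∀ c : T, A * (A * c) = 0 := fun c => by rw [← mul_assoc, hsq i, zero_mul]
  have sqB : ∀ c : T, B * (B * c) = 0 := fun c => by rw [← mul_assoc, hsq (i+1), zero_mul]
  have sqA' : A * A = 0 := hsq i
  have sqB' : B * B = 0 := hsq (i+1)
  have br : B * (A * B) = A * (B * A) := by
    rw [← mul_assoc, ← mul_assoc]; exact hbr i
  have lt : ∀ (X : T), (∀ j, Commute X (a j)) → (B * X = X * B) ∧ (A * X = X * A) ∧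
      (∀ c : T, B * (X * c) = X * (B * c)) ∧ (∀ c : T, A * (X * c) = X * (A * c)) := by
    intro X hX
    refine ⟨(hX (i+1)).symm.eq, (hX i).symm.eq, fun c => ?_, fun c => ?_⟩
    · rw [← mul_assoc, (hX (i+1)).symm.eq, mul_assoc]
    · rw [← mul_assoc, (hX i).symm.eq, mul_assoc]
  obtain ⟨Bt, At, Btc, Atc⟩ := lt t ht
  obtain ⟨Bs, As, Bsc, Asc⟩ := lt s hs
  have st : s * t = t * s := hts.symm.eq
  have stc : ∀ c : T, s * (t * c) = t * (s * c) := fun c => by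
    rw [← mul_assoc, st, mul_assoc]
  simp only [ncPhi]
  rw [← hA, ← hB]
  simp only [ncPhi, mul_add, add_mul, mul_one, one_mul, mul_assoc, Bt, At, Btc, Atc,
    Bs, As, Bsc, Asc, st, stc, sqA, sqB, sqA', sqB', br, mul_zero, zero_mul, add_zero, zero_add]
  abel

lemma ncCommute_lc {x y : T} (h : Commute x y) (c : T) : x * (y * c) = y * (x * c) := by
  rw [← mul_assoc, h.eq, mul_assoc]

lemma commute_ncPhi_ncU (a : ℕ → T) (hcm : ∀ i j, i + 2 ≤ j → Commute (a i) (a j))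
    {t s : T} (ht : ∀ j, Commute t (a j)) (hs : ∀ j, Commute s (a j)) (hts : Commute t s)
    {n k : ℕ} (h : k + 1 ≤ n) : Commute (ncPhi a t n) (ncU a k s) := by
  induction k with
  | zero => exact Commute.one_right _
  | succ k ih =>
    refine (ih (by omega)).mul_right ?_
    exact (commute_ncPhi_ncPhi a (hcm k n (by omega)) hts.symm (hs n) (ht k)).symm

lemma commute_ncPhi_ncD (a : ℕ → T) (hcm : ∀ i j, i + 2 ≤ j → Commute (a i) (a j))
    {t s : T} (ht : ∀ j, Commute t (a j)) (hs : ∀ j, Commute s (a j)) (hts : Commute t s)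
    {n k : ℕ} (h : k + 1 ≤ n) : Commute (ncPhi a t n) (ncD a k s) := by
  induction k with
  | zero => exact Commute.one_right _
  | succ k ih =>
    refine Commute.mul_right ?_ (ih (by omega))
    exact (commute_ncPhi_ncPhi a (hcm k n (by omega)) hts.symm (hs n) (ht k)).symm

lemma ncDU (a : ℕ → T) (hsq : ∀ i, a i * a i = 0)
    (hbr : ∀ i, a (i + 1) * a i * a (i + 1) = a i * a (i + 1) * a i)
    (hcm : ∀ i j, i + 2 ≤ j → Commute (a i) (a j))
    {t s : T} (ht : ∀ j, Commute t (a j)) (hs : ∀ j, Commute s (a j)) (hts : Commute t s) :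
    ∀ n, ncD a n t * ncU a n s = ncU a n s * ncD a n t := by
  intro n
  induction n with
  | zero => simp [ncD, ncU]
  | succ n ih =>
    match n, ih with
    | 0, _ =>
      show ncPhi a t 0 * 1 * (1 * ncPhi a s 0) = 1 * ncPhi a s 0 * (ncPhi a t 0 * 1)
      simp only [mul_one, one_mul]
      rw [ncPhi_mul_same a hsq t s 0 (hs 0), ncPhi_mul_same a hsq s t 0 (ht 0), add_comm]
    | (k+1), ih =>
      have cU : Commute (ncPhi a t (k+1)) (ncU a k s) :=
        commute_ncPhi_ncU a hcm ht hs hts (by omega)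
      have cD : Commute (ncPhi a s (k+1)) (ncD a k t) :=
        commute_ncPhi_ncD a hcm hs ht hts.symm (by omega)
      have collapse : ncU a (k+1) s * ncD a (k+1) t
          = ncU a k s * (ncPhi a (t+s) k * ncD a k t) := by
        show ncU a k s * ncPhi a s k * (ncPhi a t k * ncD a k t) = _
        rw [mul_assoc (ncU a k s), ← mul_assoc (ncPhi a s k),
          ncPhi_mul_same a hsq s t k (ht k), add_comm s t]
      have yb' : ∀ c : T, ncPhi a t (k+1) * (ncPhi a (t+s) k * (ncPhi a s (k+1) * c))
          = ncPhi a s k * (ncPhi a (t+s) (k+1) * (ncPhi a t k * c)) := fun c => by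
        rw [← mul_assoc, ← mul_assoc, ← mul_assoc, ← mul_assoc,
          ncYB a hsq hbr t s k ht hs hts]
      show (ncPhi a t (k+1) * ncD a (k+1) t) * (ncU a (k+1) s * ncPhi a s (k+1))
          = (ncU a (k+1) s * ncPhi a s (k+1)) * (ncPhi a t (k+1) * ncD a (k+1) t)
      calc (ncPhi a t (k+1) * ncD a (k+1) t) * (ncU a (k+1) s * ncPhi a s (k+1))
          = ncPhi a t (k+1) * (ncD a (k+1) t * ncU a (k+1) s) * ncPhi a s (k+1) := by
            rw [mul_assoc, mul_assoc, mul_assoc]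
        _ = ncPhi a t (k+1) * (ncU a (k+1) s * ncD a (k+1) t) * ncPhi a s (k+1) := by rw [ih]
        _ = ncPhi a t (k+1) * (ncU a k s * (ncPhi a (t+s) k * (ncD a k t * ncPhi a s (k+1)))) := by
            rw [collapse]; simp only [mul_assoc]
        _ = ncU a k s * (ncPhi a t (k+1) * (ncPhi a (t+s) k * (ncPhi a s (k+1) * ncD a k t))) := by
            rw [← cD.eq, ncCommute_lc cU]
        _ = ncU a k s * (ncPhi a s k * (ncPhi a (t+s) (k+1) * (ncPhi a t k * ncD a k t))) := by
            rw [yb']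
        _ = ncU a k s * (ncPhi a s k * ((ncPhi a s (k+1) * ncPhi a t (k+1)) * (ncPhi a t k * ncD a k t))) := by
            rw [ncPhi_mul_same a hsq s t (k+1) (ht (k+1)), add_comm s t]
        _ = (ncU a (k+1) s * ncPhi a s (k+1)) * (ncPhi a t (k+1) * ncD a (k+1) t) := by
            show _ = (ncU a k s * ncPhi a s k * ncPhi a s (k+1)) * (ncPhi a t (k+1) * (ncPhi a t k * ncD a k t))
            simp only [mul_assoc]

lemma ncD_mul_ncU_neg (a : ℕ → T) (hsq : ∀ i, a i * a i = 0)
    {t : T} (ht : ∀ j, Commute t (a j)) :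
    ∀ n, ncD a n t * ncU a n (-t) = 1 := by
  intro n
  induction n with
  | zero => simp [ncD, ncU]
  | succ n ih =>
    show ncPhi a t n * ncD a n t * (ncU a n (-t) * ncPhi a (-t) n) = 1
    rw [mul_assoc, ← mul_assoc (ncD a n t), ih, one_mul,
      ncPhi_mul_same a hsq t (-t) n ((ht n).neg_left), add_neg_cancel]
    simp [ncPhi]

lemma ncU_neg_mul_ncD (a : ℕ → T) (hsq : ∀ i, a i * a i = 0)
    {t : T} (ht : ∀ j, Commute t (a j)) :
    ∀ n, ncU a n (-t) * ncD a n t = 1 := by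
  intro n
  induction n with
  | zero => simp [ncD, ncU]
  | succ n ih =>
    show ncU a n (-t) * ncPhi a (-t) n * (ncPhi a t n * ncD a n t) = 1
    rw [mul_assoc, ← mul_assoc (ncPhi a (-t) n),
      ncPhi_mul_same a hsq (-t) t n (ht n), neg_add_cancel]
    have : ncPhi a (0 : T) n = 1 := by simp [ncPhi]
    rw [this, one_mul, ih]

theorem ncD_comm (a : ℕ → T) (hsq : ∀ i, a i * a i = 0)
    (hbr : ∀ i, a (i + 1) * a i * a (i + 1) = a i * a (i + 1) * a i)
    (hcm : ∀ i j, i + 2 ≤ j → Commute (a i) (a j))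
    {x y : T} (hx : ∀ j, Commute x (a j)) (hy : ∀ j, Commute y (a j)) (hxy : Commute x y)
    (n : ℕ) : ncD a n x * ncD a n y = ncD a n y * ncD a n x := by
  have hny : ∀ j, Commute (-y) (a j) := fun j => (hy j).neg_left
  have hDU : ncD a n x * ncU a n (-y) = ncU a n (-y) * ncD a n x :=
    ncDU a hsq hbr hcm hx hny hxy.neg_right n
  calc ncD a n x * ncD a n y
      = (ncD a n y * ncU a n (-y)) * ncD a n x * ncD a n y := by
        rw [ncD_mul_ncU_neg a hsq hy, one_mul]
    _ = ncD a n y * (ncU a n (-y) * ncD a n x) * ncD a n y := by rw [mul_assoc (ncD a n y)]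
    _ = ncD a n y * (ncD a n x * ncU a n (-y)) * ncD a n y := by rw [hDU]
    _ = ncD a n y * ncD a n x * (ncU a n (-y) * ncD a n y) := by
        simp only [mul_assoc]
    _ = ncD a n y * ncD a n x := by rw [ncU_neg_mul_ncD a hsq hy, mul_one]
end Abstract

lemma coeff_desc_prod {R : Type*} [Ring R] {α : Type*} [LinearOrder α]
    (b : α → R) (s : Finset α) (k : ℕ) :
    ((((s.sort (· ≤ ·)).reverse.map fun i => (1 : R[X]) + C (b i) * X).prod).coeff k)
      = ∑ T ∈ Finset.powersetCard k s, ((T.sort (· ≤ ·)).reverse.map b).prod := by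
  classical
  induction s using Finset.induction_on_min generalizing k with
  | empty =>
    simp only [Finset.sort_empty, List.reverse_nil, List.map_nil, List.prod_nil]
    cases k with
    | zero => simp
    | succ k => rw [Finset.powersetCard_eq_empty.mpr (by simp)]; simp [Polynomial.coeff_one]
  | insert a s hmin ih =>
    have ha : a ∉ s := fun h => lt_irrefl a (hmin a h)
    have hle : ∀ x ∈ s, a ≤ x := fun x hx => (hmin x hx).le
    rw [Finset.sort_insert (· ≤ ·) hle ha]
    simp only [List.reverse_cons, List.map_append, List.map_cons, List.map_nil,
      List.prod_append, List.prod_cons, List.prod_nil, mul_one]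
    set P : R[X] := ((s.sort (· ≤ ·)).reverse.map fun i => (1 : R[X]) + C (b i) * X).prod with hP
    cases k with
    | zero =>
      rw [Polynomial.mul_coeff_zero]
      have h1 : ((1 : R[X]) + C (b a) * X).coeff 0 = 1 := by simp
      rw [h1, mul_one]
      rw [ih 0]
      simp [Finset.powersetCard_zero]
    | succ k =>
      have expand : (P * (1 + C (b a) * X)).coeff (k+1)
          = P.coeff (k+1) + P.coeff k * b a := by
        rw [mul_add, mul_one, Polynomial.coeff_add, ← mul_assoc, Polynomial.coeff_mul_X,
          Polynomial.coeff_mul_C]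
      rw [expand, Finset.powersetCard_succ_insert ha, Finset.sum_union, Finset.sum_image]
      · congr 1
        · exact ih (k+1)
        · rw [ih k, Finset.sum_mul]
          refine Finset.sum_congr rfl fun T hT => ?_
          obtain ⟨hTs, _⟩ := Finset.mem_powersetCard.mp hT
          have haT : a ∉ T := fun h => ha (hTs h)
          have hleT : ∀ x ∈ T, a ≤ x := fun x hx => hle x (hTs hx)
          rw [Finset.sort_insert (· ≤ ·) hleT haT]
          simp [List.prod_append]
      · intro x hx y hy hxy
        obtain ⟨hxs, _⟩ := Finset.mem_powersetCard.mp hx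
        obtain ⟨hys, _⟩ := Finset.mem_powersetCard.mp hy
        have hax : a ∉ x := fun h => ha (hxs h)
        have hay : a ∉ y := fun h => ha (hys h)
        rw [← Finset.erase_insert hax, ← Finset.erase_insert hay, hxy]
      · rw [Finset.disjoint_left]
        intro T hT1 hT2
        obtain ⟨hTs, _⟩ := Finset.mem_powersetCard.mp hT1
        obtain ⟨T', hT', rfl⟩ := Finset.mem_image.mp hT2
        exact ha (hTs (Finset.mem_insert_self a T'))


noncomputable def nilAN (m : ℕ) (i : ℕ) : NilCoxeter m :=
  if h : i < m then nilA m ⟨i, h⟩ else 0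

lemma nilAN_sq (m i : ℕ) : nilAN m i * nilAN m i = 0 := by
  unfold nilAN
  split
  · have := RingQuot.mkRingHom_rel (NilCoxeterRel.sq (m := m) ⟨i, by assumption⟩)
    simpa [nilA] using this
  · simp

lemma nilAN_braid (m i : ℕ) :
    nilAN m (i+1) * nilAN m i * nilAN m (i+1) = nilAN m i * nilAN m (i+1) * nilAN m i := by
  by_cases h : i + 1 < m
  · have hi : i < m := by omega
    have key := RingQuot.mkRingHom_rel
      (NilCoxeterRel.braid (m := m) ⟨i+1, h⟩ ⟨i, hi⟩ (Or.inr rfl))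
    simp only [map_mul] at key
    simp only [nilAN, dif_pos h, dif_pos hi]
    exact key
  · have h1 : nilAN m (i+1) = 0 := dif_neg h
    simp [h1]

lemma nilAN_comm (m i j : ℕ) (h : i + 2 ≤ j) : Commute (nilAN m i) (nilAN m j) := by
  by_cases hj : j < m
  · have hi : i < m := by omega
    have key := RingQuot.mkRingHom_rel
      (NilCoxeterRel.comm (m := m) ⟨i, hi⟩ ⟨j, hj⟩ (Or.inl (by simp; omega)))
    simp only [map_mul] at key
    simp only [nilAN, dif_pos hi, dif_pos hj]
    exact key
  · have h1 : nilAN m j = 0 := dif_neg hj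
    rw [h1]; exact Commute.zero_right _

lemma ncRel_map {T₁ T₂ : Type*} [Ring T₁] [Ring T₂] (f : T₁ →+* T₂) (a : ℕ → T₁)
    (hsq : ∀ i, a i * a i = 0)
    (hbr : ∀ i, a (i+1) * a i * a (i+1) = a i * a (i+1) * a i)
    (hcm : ∀ i j, i + 2 ≤ j → Commute (a i) (a j)) :
    (∀ i, f (a i) * f (a i) = 0) ∧
    (∀ i, f (a (i+1)) * f (a i) * f (a (i+1)) = f (a i) * f (a (i+1)) * f (a i)) ∧
    (∀ i j, i + 2 ≤ j → Commute (f (a i)) (f (a j))) := by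
  refine ⟨fun i => ?_, fun i => ?_, fun i j h => ?_⟩
  · rw [← map_mul, hsq, map_zero]
  · rw [← map_mul, ← map_mul, ← map_mul, ← map_mul, hbr]
  · show f (a i) * f (a j) = f (a j) * f (a i)
    rw [← map_mul, ← map_mul, (hcm i j h).eq]

lemma map_ncD {T₁ T₂ : Type*} [Ring T₁] [Ring T₂] (f : T₁ →+* T₂) (a₁ : ℕ → T₁) (t : T₁) :
    ∀ n, f (ncD a₁ n t) = ncD (fun i => f (a₁ i)) n (f t) := by
  intro n
  induction n with
  | zero => simp [ncD]
  | succ n ih => simp [ncD, ncPhi, ih]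

lemma ncD_eq_prod {T : Type*} [Ring T] (a : ℕ → T) (t : T) : ∀ n,
    ncD a n t = ((List.range n).reverse.map fun i => 1 + t * a i).prod := by
  intro n
  induction n with
  | zero => simp [ncD]
  | succ n ih => rw [List.range_succ]; simp [ncD, ncPhi, ih]

/-- Fomin–Stanley: the elements `h_k` of the nilCoxeter algebra pairwise commute. -/
theorem nilH_commute (m k l : ℕ) : nilH m k * nilH m l = nilH m l * nilH m k := by
  classical
  let b : ℕ → Polynomial (NilCoxeter m) := fun i => C (nilAN m i)
  let F : Polynomial (NilCoxeter m) := ncD b m X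
  obtain ⟨bsq, bbr, bcm⟩ :=
    ncRel_map (C : NilCoxeter m →+* Polynomial (NilCoxeter m)) (nilAN m) (nilAN_sq m) (nilAN_braid m) (nilAN_comm m)
  let a2 : ℕ → Polynomial (Polynomial (NilCoxeter m)) := fun i => C (b i)
  obtain ⟨asq, abr, acm⟩ := ncRel_map (C : Polynomial (NilCoxeter m) →+* Polynomial (Polynomial (NilCoxeter m))) b bsq bbr bcm
  have hx : ∀ j, Commute (X : Polynomial (Polynomial (NilCoxeter m))) (a2 j) := fun j => commute_X _
  have hy : ∀ j, Commute (C (X : Polynomial (NilCoxeter m))) (a2 j) := fun j => by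
    show C X * C (b j) = C (b j) * C X
    rw [← map_mul, ← map_mul, (commute_X (b j)).eq]
  have hxy : Commute (X : Polynomial (Polynomial (NilCoxeter m))) (C (X : Polynomial (NilCoxeter m))) := commute_X _
  have bigComm := ncD_comm a2 asq abr acm hx hy hxy m
  have hfun : (fun i => (Polynomial.mapRingHom (C : NilCoxeter m →+* Polynomial (NilCoxeter m))) (b i)) = a2 := by
    funext i
    simp only [b, a2, coe_mapRingHom, map_C]
  have e1 : (Polynomial.mapRingHom (C : NilCoxeter m →+* Polynomial (NilCoxeter m))) F = ncD a2 m X := by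
    rw [map_ncD, hfun]
    congr 1
    simp [coe_mapRingHom]
  have e2 : (C : Polynomial (NilCoxeter m) →+* Polynomial (Polynomial (NilCoxeter m))) F = ncD a2 m (C X) :=
    map_ncD (C : Polynomial (NilCoxeter m) →+* Polynomial (Polynomial (NilCoxeter m))) b X m
  rw [← e1, ← e2] at bigComm
  have key : C (F.coeff k) * F = F * C (F.coeff k) := by
    have := congrArg (fun p => p.coeff k) bigComm
    simpa only [coeff_mul_C, coeff_C_mul, coe_mapRingHom, coeff_map] using this
  have final : F.coeff k * F.coeff l = F.coeff l * F.coeff k := by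
    have := congrArg (fun p => p.coeff l) key
    simpa only [coeff_mul_C, coeff_C_mul] using this
  have hF' : F = ((List.range m).reverse.map fun i => (1 : Polynomial (NilCoxeter m)) + C (nilAN m i) * X).prod := by
    show ncD b m X = _
    rw [ncD_eq_prod]
    simp only [Polynomial.X_mul]
    rfl
  have hPF : (((Finset.univ : Finset (Fin m)).sort (· ≤ ·)).reverse.map
      fun i => (1 : Polynomial (NilCoxeter m)) + C (nilA m i) * X).prod = F := by
    rw [Fin.sort_univ, hF', ← (List.ext_getElem (by simp) (fun _ _ _ => by simp) : (List.finRange m).map Fin.val = List.range m)]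
    rw [← List.map_reverse, List.map_map]
    refine congrArg List.prod (List.map_congr_left fun i _ => ?_)
    simp [Function.comp, nilAN]
  have hH : ∀ j, nilH m j = F.coeff j := fun j => by
    rw [nilH, ← hPF, coeff_desc_prod]
  rw [hH k, hH l, final]
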